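/- Let F be a subfield of ℝ that is really closed, i.e., whenever n ≥ 1, a₀, …, a_{n−1} ∈ F are nonzero, b₀, …, b_{n−1} ∈ F are pairwise distinct, x ∈ ℝ is positive, and Σ_{i<n} a_i · x^{b_i} = 0 (real power x^{b_i} for x > 0), then x ∈ F. If F is a proper subfield of ℝ (there exists x ∈ ℝ \ F), then the transcendence degree of ℝ over F equals the cardinality of the continuum 2^{ℵ₀}. -/

import Mathlib

open scoped Real

/-- A subfield `F` of `ℝ` is *really closed* if whenever `n ≥ 1`, the coefficients
`a i ∈ F` are nonzero, the exponents `b i ∈ F` are pairwise distinct, `x > 0`, and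
`∑ i, a i * x ^ (b i) = 0` (real power), then `x ∈ F`. -/
def IsReallyClosed (F : Subfield ℝ) : Prop :=
  ∀ n : ℕ, 1 ≤ n → ∀ a b : Fin n → ℝ,
    (∀ i, a i ∈ F) → (∀ i, b i ∈ F) → (∀ i, a i ≠ 0) →
    (∀ i j, i ≠ j → b i ≠ b j) →
    ∀ x : ℝ, 0 < x → (∑ i, a i * x ^ (b i)) = 0 → x ∈ F

/-- The transcendence degree of `ℝ` over a subfield `F`: the supremum of the
cardinalities of subsets of `ℝ` that are algebraically independent over `F`. -/
noncomputable def trdegOver (F : Subfield ℝ) : Cardinal :=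
  ⨆ s : {s : Set ℝ // AlgebraicIndependent F ((↑) : s → ℝ)}, Cardinal.mk s.1

/-- Powers of `t ∉ F` with `ℚ`-linearly independent exponents taken from `F` are
algebraically independent over a really closed subfield `F`. -/
lemma algIndep_rpow (F : Subfield ℝ) (hF : IsReallyClosed F) {t : ℝ} (ht : 0 < t)
    (htF : t ∉ F) {S : Set ℝ} (hSF : ∀ s : S, (s : ℝ) ∈ F)
    (hS : LinearIndependent ℚ ((↑) : S → ℝ)) :
    AlgebraicIndependent F (fun s : S => t ^ (s : ℝ)) := by
  rw [algebraicIndependent_iff]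
  intro p hp
  by_contra hp0
  -- the exponent map
  set e : (S →₀ ℕ) → ℝ := fun d => ∑ i ∈ d.support, (i : ℝ) * d i with he
  have key : ∀ d : S →₀ ℕ, e d = Finsupp.linearCombination ℚ ((↑) : S → ℝ)
      (d.mapRange (Nat.cast : ℕ → ℚ) Nat.cast_zero) := by
    intro d
    rw [Finsupp.linearCombination_apply, Finsupp.sum_mapRange_index (by simp)]
    simp only [he, Finsupp.sum, Rat.smul_def, Rat.cast_natCast]
    exact Finset.sum_congr rfl fun i _ => mul_comm _ _
  have he_inj : Function.Injective e := by
    intro d₁ d₂ h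
    rw [key d₁, key d₂] at h
    have h2 := hS h
    exact Finsupp.mapRange_injective _ _ Nat.cast_injective h2
  -- rewrite the vanishing sum
  have hsum : ∑ d ∈ p.support, ((MvPolynomial.coeff d p : F) : ℝ) * t ^ (e d) = 0 := by
    rw [← hp, MvPolynomial.aeval_def, MvPolynomial.eval₂_eq]
    refine Finset.sum_congr rfl fun d _ => ?_
    congr 1
    symm
    calc ∏ i ∈ d.support, (t ^ (i : ℝ)) ^ d i
        = ∏ i ∈ d.support, Real.exp (Real.log t * ((i : ℝ) * d i)) := by
          refine Finset.prod_congr rfl fun i _ => ?_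
          rw [Real.rpow_def_of_pos ht, ← Real.exp_nat_mul]
          congr 1; ring
      _ = Real.exp (∑ i ∈ d.support, Real.log t * ((i : ℝ) * d i)) :=
          (Real.exp_sum _ _).symm
      _ = t ^ e d := by
          rw [Real.rpow_def_of_pos ht, he, Finset.mul_sum]
  -- apply really-closedness
  have hne : p.support.Nonempty := MvPolynomial.support_nonempty.2 hp0
  set n := p.support.card with hn
  have hn1 : 1 ≤ n := Finset.card_pos.2 hne
  have hcard : Fintype.card (↥p.support) = n := Fintype.card_coe _
  set σ : Fin n ≃ ↥p.support := (Fintype.equivFinOfCardEq hcard).symm with hσ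
  have := hF n hn1 (fun i => ((MvPolynomial.coeff (σ i) p : F) : ℝ)) (fun i => e (σ i))
    (fun i => SetLike.coe_mem _)
    (fun i => by
      refine sum_mem fun c hc => ?_
      exact F.mul_mem (hSF c) (by exact_mod_cast natCast_mem F _))
    (fun i => by
      have := MvPolynomial.mem_support_iff.1 (σ i).2
      simpa using this)
    (fun i j hij => by
      intro hbe
      exact hij (σ.injective (Subtype.ext (he_inj hbe))))
    t ht ?_
  · exact htF this
  · rw [← hsum, ← Finset.sum_coe_sort p.support]
    exact Equiv.sum_comp σ (fun d : ↥p.support => ((MvPolynomial.coeff d p : F) : ℝ) * t ^ e d)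

/-- If a really closed proper subfield has cardinality continuum, there is an
algebraically independent (over `F`) subset of `ℝ` of cardinality continuum. -/
lemma exists_big (F : Subfield ℝ) (hF : IsReallyClosed F)
    (hproper : ∃ x : ℝ, x ∉ F) (hcard : Cardinal.mk F = Cardinal.continuum) :
    ∃ A : Set ℝ, AlgebraicIndependent F ((↑) : A → ℝ) ∧ Cardinal.mk A = Cardinal.continuum := by
  classical
  obtain ⟨x, hx⟩ := hproper
  obtain ⟨t, ht, htF⟩ : ∃ t : ℝ, 0 < t ∧ t ∉ F := by
    rcases lt_trichotomy x 0 with h | h | h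
    · exact ⟨-x, by linarith, fun hm => hx (by simpa using F.neg_mem hm)⟩
    · exact absurd (h ▸ F.zero_mem) hx
    · exact ⟨x, h, hx⟩
  have ht1 : t ≠ 1 := fun h => htF (h ▸ F.one_mem)
  have hlog : Real.log t ≠ 0 := Real.log_ne_zero_of_pos_of_ne_one ht ht1
  -- a big `ℚ`-linearly independent subset of `F`
  have hrank : Module.rank ℚ F = Cardinal.continuum := by
    rw [Module.Free.rank_eq_mk_of_infinite_lt, hcard]
    rw [Cardinal.lift_id, Cardinal.lift_id, Cardinal.mk_eq_aleph0 ℚ, hcard]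
    exact Cardinal.aleph0_lt_continuum
  obtain ⟨sF, hsF_card, hsF_li⟩ := exists_set_linearIndependent ℚ F
  let j : F →ₗ[ℚ] ℝ :=
    { toFun := Subtype.val
      map_add' := fun _ _ => rfl
      map_smul' := fun q y => by
        simp [Rat.smul_def] }
  have h1 : LinearIndependent ℚ (fun y : sF => ((y : F) : ℝ)) :=
    hsF_li.map' j (LinearMap.ker_eq_bot.2 Subtype.val_injective)
  have h2 : LinearIndependent ℚ
      ((↑) : (Subtype.val '' sF : Set ℝ) → ℝ) :=
      LinearIndepOn.id_image (v := (Subtype.val : F → ℝ)) (s := sF) h1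
  set S : Set ℝ := Subtype.val '' sF with hSdef
  have hSF : ∀ s : S, (s : ℝ) ∈ F := by
    rintro ⟨-, ⟨y, -, rfl⟩⟩
    exact y.2
  have hAI := algIndep_rpow F hF ht htF hSF h2
  have hinj : Function.Injective (fun s : S => t ^ (s : ℝ)) := by
    intro a b h
    simp only [Real.rpow_def_of_pos ht] at h
    exact Subtype.ext (mul_left_cancel₀ hlog (Real.exp_injective h))
  refine ⟨Set.range (fun s : S => t ^ (s : ℝ)), hAI.coe_range, ?_⟩
  rw [Cardinal.mk_range_eq _ hinj]
  calc Cardinal.mk S = Cardinal.mk sF := Cardinal.mk_image_eq Subtype.val_injective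
    _ = Cardinal.continuum := by rw [hsF_card, hrank]

theorem really_closed_proper_subfield_trdeg_continuum
    (F : Subfield ℝ) (hF : IsReallyClosed F) (hproper : ∃ x : ℝ, x ∉ F) :
    trdegOver F = Cardinal.continuum := by
  classical
  have hFle : Cardinal.mk F ≤ Cardinal.continuum :=
    (Cardinal.mk_subtype_le _).trans_eq Cardinal.mk_real
  have hbdd : BddAbove (Set.range
      fun s : {s : Set ℝ // AlgebraicIndependent F ((↑) : s → ℝ)} => Cardinal.mk s.1) := by
    refine ⟨Cardinal.continuum, ?_⟩
    rintro - ⟨s, rfl⟩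
    exact (Cardinal.mk_set_le s.1).trans_eq Cardinal.mk_real
  haveI : Nonempty {s : Set ℝ // AlgebraicIndependent F ((↑) : s → ℝ)} :=
    ⟨⟨∅, algebraicIndependent_empty⟩⟩
  refine le_antisymm
    (ciSup_le fun s => (Cardinal.mk_set_le s.1).trans_eq Cardinal.mk_real) ?_
  suffices h : ∃ A : Set ℝ, AlgebraicIndependent F ((↑) : A → ℝ) ∧
      Cardinal.continuum ≤ Cardinal.mk A by
    obtain ⟨A, hA, hAc⟩ := h
    exact hAc.trans (le_ciSup hbdd ⟨A, hA⟩)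
  obtain ⟨s, hs⟩ := exists_isTranscendenceBasis (↥F) (A := ℝ)
  rcases Set.eq_empty_or_nonempty s with rfl | hne
  · -- `ℝ` is algebraic over `F`, hence `#F = 𝔠`
    haveI : IsEmpty (↥(∅ : Set ℝ)) := Set.isEmpty_coe_sort.2 rfl
    haveI halg := hs.isEmpty_iff_isAlgebraic.1 ‹_›
    haveI : NoZeroSMulDivisors (↥F) ℝ :=
      inferInstance
    have hle := Algebra.IsAlgebraic.cardinalMk_le_max (↥F) ℝ
    rw [Cardinal.mk_real] at hle
    have hFc : Cardinal.mk F = Cardinal.continuum := by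
      refine le_antisymm hFle ?_
      rcases max_cases (Cardinal.mk F) Cardinal.aleph0 with ⟨hm, -⟩ | ⟨hm, -⟩
      · rwa [hm] at hle
      · exact absurd (hle.trans_eq hm |>.trans_lt Cardinal.aleph0_lt_continuum) (lt_irrefl _)
    obtain ⟨A, hA, hAc⟩ := exists_big F hF hproper hFc
    exact ⟨A, hA, hAc.ge⟩
  · haveI : Nonempty (↥s) := hne.to_subtype
    have h := hs.lift_cardinalMk_eq_max_lift
    simp only [Cardinal.lift_id] at h
    rw [Cardinal.mk_real] at h
    rcases le_or_gt Cardinal.continuum (Cardinal.mk s) with hle | hlt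
    · exact ⟨s, hs.1, hle⟩
    · have hFc : Cardinal.mk F = Cardinal.continuum := by
        refine le_antisymm hFle ?_
        have : Cardinal.continuum ≤ Cardinal.mk F ⊔ Cardinal.mk s ⊔ Cardinal.aleph0 := h.le
        rcases le_sup_iff.1 this with h1 | h2
        · rcases le_sup_iff.1 h1 with h3 | h4
          · exact h3
          · exact absurd h4 hlt.not_ge
        · exact absurd h2 Cardinal.aleph0_lt_continuum.not_ge
      obtain ⟨A, hA, hAc⟩ := exists_big F hF hproper hFc
      exact ⟨A, hA, hAc.ge⟩
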